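/- Let K be a field, let L(x,y) be the free Lie algebra over K on two generators x and y, and let h : L(x,y) → K be the Lie algebra homomorphism to K (regarded as the one-dimensional abelian Lie algebra) determined by h(x) = 1 and h(y) = 0. Then B = ker h is an ideal of codimension 1 in L(x,y), and B is not finitely generated as a Lie algebra. -/

import Mathlib

attribute [local instance 100] LieRing.ofAssociativeRing

open Polynomial

namespace Aux18

variable (K : Type*) [Field K]

/-- The endomorphism `(r, c) ↦ (X * r, 0)` of `K[X] × K`, the image of `x`. -/
noncomputable def A : Module.End K (Polynomial K × K) :=
  (LinearMap.inl K (Polynomial K) K).comp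
    ((LinearMap.mulLeft K (X : Polynomial K)).comp (LinearMap.fst K (Polynomial K) K))

/-- The endomorphism `(r, c) ↦ (C c, 0)` of `K[X] × K`, the image of `y`. -/
noncomputable def Bop : Module.End K (Polynomial K × K) :=
  (LinearMap.inl K (Polynomial K) K).comp
    ((Algebra.linearMap K (Polynomial K)).comp (LinearMap.snd K (Polynomial K) K))

@[simp] theorem A_apply (v : Polynomial K × K) : A K v = (X * v.1, 0) := rfl

@[simp] theorem Bop_apply (v : Polynomial K × K) : Bop K v = (C v.2, 0) := by
  simp [Bop, Algebra.linearMap_apply, algebraMap_eq]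

/-- The representation of the free Lie algebra on `K[X] × K`. -/
noncomputable def φ : FreeLieAlgebra K (Fin 2) →ₗ⁅K⁆ Module.End K (Polynomial K × K) :=
  FreeLieAlgebra.lift K ![A K, Bop K]

@[simp] theorem φ_of_zero : φ K (FreeLieAlgebra.of K 0) = A K := by
  simp [φ, FreeLieAlgebra.lift_of_apply]

@[simp] theorem φ_of_one : φ K (FreeLieAlgebra.of K 1) = Bop K := by
  simp [φ, FreeLieAlgebra.lift_of_apply]

@[simp] theorem h18_of_zero : FreeLieAlgebra.lift K (![1, 0] : Fin 2 → K)
    (FreeLieAlgebra.of K 0) = 1 := by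
  simp [FreeLieAlgebra.lift_of_apply]

@[simp] theorem h18_of_one : FreeLieAlgebra.lift K (![1, 0] : Fin 2 → K)
    (FreeLieAlgebra.of K 1) = 0 := by
  simp [FreeLieAlgebra.lift_of_apply]

/-- In the abelian Lie algebra `K`, every bracket maps to zero. -/
theorem h18_lie (z w : FreeLieAlgebra K (Fin 2)) :
    FreeLieAlgebra.lift K (![1, 0] : Fin 2 → K) ⁅z, w⁆ = 0 := by
  rw [LieHom.map_lie, Ring.lie_def]; ring

/-- The free Lie algebra is generated by its generators. -/
theorem mem_lieSpan_range_of (z : FreeLieAlgebra K (Fin 2)) :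
    z ∈ LieSubalgebra.lieSpan K (FreeLieAlgebra K (Fin 2))
      (Set.range (FreeLieAlgebra.of K)) := by
  set S := LieSubalgebra.lieSpan K (FreeLieAlgebra K (Fin 2))
      (Set.range (FreeLieAlgebra.of K)) with hS
  let f : Fin 2 → S := fun i =>
    ⟨FreeLieAlgebra.of K i, LieSubalgebra.subset_lieSpan ⟨i, rfl⟩⟩
  have h : S.incl.comp (FreeLieAlgebra.lift K f) = LieHom.id := by
    apply FreeLieAlgebra.hom_ext
    intro i
    simp [f, FreeLieAlgebra.lift_of_apply]
  have h2 : S.incl.comp (FreeLieAlgebra.lift K f) z = z := by rw [h]; rfl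
  rw [← h2]
  exact (FreeLieAlgebra.lift K f z).2

/-- Every element in the image of `φ` has zero second component. -/
theorem φ_snd (z : FreeLieAlgebra K (Fin 2)) : ∀ v : Polynomial K × K,
    ((φ K z) v).2 = 0 := by
  refine LieSubalgebra.lieSpan_induction K
      (p := fun w _ => ∀ v : Polynomial K × K, ((φ K w) v).2 = 0)
      ?_ (fun v => by simp) ?_ ?_ ?_ (mem_lieSpan_range_of K z)
  · rintro x ⟨i, rfl⟩
    fin_cases i <;> intro v <;> simp
  · intro x y _ _ hx hy v
    rw [map_add, LinearMap.add_apply, Prod.snd_add, hx v, hy v, add_zero]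
  · intro t x _ hx v
    rw [map_smul, LinearMap.smul_apply, Prod.smul_snd, hx v, smul_zero]
  · intro x y _ _ hx hy v
    rw [LieHom.map_lie, Ring.lie_def, LinearMap.sub_apply, Module.End.mul_apply,
      Module.End.mul_apply, Prod.snd_sub, hx, hy, sub_zero]

/-- The key computation: on the subspace `K[X] × 0`, the element `z` acts as
`h(z)`-times multiplication by `X`. -/
theorem φ_fst (z : FreeLieAlgebra K (Fin 2)) (r : Polynomial K) :
    (φ K z) (r, 0) =
      ((FreeLieAlgebra.lift K (![1, 0] : Fin 2 → K) z) • (X * r), 0) := by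
  revert r
  refine LieSubalgebra.lieSpan_induction K
      (p := fun w _ => ∀ r : Polynomial K, (φ K w) (r, 0) =
        ((FreeLieAlgebra.lift K (![1, 0] : Fin 2 → K) w) • (X * r), 0))
      ?_ (fun r => by simp; rfl) ?_ ?_ ?_ (mem_lieSpan_range_of K z)
  · rintro x ⟨i, rfl⟩
    fin_cases i <;> intro r <;> simp
  · intro x y _ _ hx hy r
    simp only [map_add, LinearMap.add_apply, hx r, hy r, Prod.mk_add_mk, add_smul,
      add_zero]
  · intro t x _ hx r
    simp only [map_smul, LinearMap.smul_apply, hx r, Prod.smul_mk, smul_smul,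
      smul_zero, smul_eq_mul, mul_zero]
  · intro x y _ _ hx hy r
    have key : ∀ (c : K) (q : Polynomial K),
        ((c • q, 0) : Polynomial K × K) = c • (q, 0) := by
      intro c q; rw [Prod.smul_mk, smul_zero]
    rw [LieHom.map_lie, Ring.lie_def, LinearMap.sub_apply, Module.End.mul_apply,
      Module.End.mul_apply, hx r, hy r, key, key, LinearMap.map_smul, LinearMap.map_smul, hx, hy,
      h18_lie, zero_smul, Prod.smul_mk, Prod.smul_mk, smul_smul, smul_smul,
      smul_zero, smul_zero, mul_comm ((FreeLieAlgebra.lift K ![1, 0]) x),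
      sub_self]
    rfl

/-- The elements `yₙ = (ad x)ⁿ y`. -/
noncomputable def yn : ℕ → FreeLieAlgebra K (Fin 2)
  | 0 => FreeLieAlgebra.of K 1
  | n + 1 => ⁅FreeLieAlgebra.of K (0 : Fin 2), yn n⁆

theorem h18_yn (n : ℕ) :
    FreeLieAlgebra.lift K (![1, 0] : Fin 2 → K) (yn K n) = 0 := by
  cases n with
  | zero => simp [yn]
  | succ n => rw [yn]; exact h18_lie K _ _

theorem φ_yn (n : ℕ) : (φ K (yn K n)) (0, 1) = ((X : Polynomial K) ^ n, 0) := by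
  induction n with
  | zero => simp [yn]
  | succ n ih =>
      have h0 : (φ K (yn K n)) ((A K) ((0 : Polynomial K), (1 : K))) = 0 := by
        rw [A_apply]
        simp only [mul_zero]
        rw [show ((0 : Polynomial K), (0 : K)) = 0 from rfl, map_zero]
      rw [yn, LieHom.map_lie, Ring.lie_def, LinearMap.sub_apply, Module.End.mul_apply,
        Module.End.mul_apply, φ_of_zero, ih, h0, sub_zero, A_apply]
      simp [pow_succ, mul_comm]

/-- The span of the powers of `X` is everything. -/
theorem span_X_pow :
    Submodule.span K (Set.range fun n : ℕ => (X : Polynomial K) ^ n) = ⊤ := by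
  rw [eq_top_iff]
  intro p hp
  clear hp
  induction p using Polynomial.induction_on' with
  | add p q hp hq => exact Submodule.add_mem _ hp hq
  | monomial n a =>
      have : (monomial n a : Polynomial K) = a • X ^ n := by
        rw [smul_eq_C_mul, C_mul_X_pow_eq_monomial]
      rw [this]
      exact Submodule.smul_mem _ _ (Submodule.subset_span ⟨n, rfl⟩)

end Aux18

open Aux18

/-- The Lie algebra homomorphism `h : L(x,y) → K` from the free Lie algebra on two
generators to `K` (the one-dimensional abelian Lie algebra, i.e. the commutative ring `K`
with its trivial commutator bracket), determined by `h(x) = 1` and `h(y) = 0`. -/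
noncomputable def h18 (K : Type*) [Field K] : FreeLieAlgebra K (Fin 2) →ₗ⁅K⁆ K :=
  FreeLieAlgebra.lift K ![1, 0]

/-- `B = ker h`, an ideal of the free Lie algebra `L(x,y)`. -/
noncomputable def B18 (K : Type*) [Field K] : LieIdeal K (FreeLieAlgebra K (Fin 2)) :=
  (h18 K).ker

/-- Let `K` be a field, `L(x,y)` the free Lie algebra over `K` on two
generators, and `h : L(x,y) → K` the Lie algebra homomorphism to the one-dimensional
abelian Lie algebra `K` with `h(x) = 1`, `h(y) = 0`. Then `B = ker h` is an ideal of
codimension `1` in `L(x,y)`, and `B` is not finitely generated as a Lie algebra: there is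
no finite subset of `B` whose Lie subalgebra span is all of `B`. -/
theorem kernel_codimension_one_not_finitely_generated (K : Type*) [Field K] :
    Module.finrank K
      (FreeLieAlgebra K (Fin 2) ⧸
        ((B18 K : Submodule K (FreeLieAlgebra K (Fin 2))))) = 1 ∧
    ¬ ∃ s : Finset (FreeLieAlgebra K (Fin 2)),
        (s : Set (FreeLieAlgebra K (Fin 2))) ⊆ (B18 K : Set (FreeLieAlgebra K (Fin 2))) ∧
        (LieSubalgebra.lieSpan K (FreeLieAlgebra K (Fin 2))
            (s : Set (FreeLieAlgebra K (Fin 2))) : Set (FreeLieAlgebra K (Fin 2))) =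
          (B18 K : Set (FreeLieAlgebra K (Fin 2))) := by
  constructor
  · -- codimension one
    have hker : ((B18 K : LieIdeal K (FreeLieAlgebra K (Fin 2))) :
        Submodule K (FreeLieAlgebra K (Fin 2))) =
        LinearMap.ker ((h18 K : FreeLieAlgebra K (Fin 2) →ₗ[K] K)) :=
      LieHom.ker_toSubmodule _
    have hsurj : Function.Surjective (h18 K : FreeLieAlgebra K (Fin 2) →ₗ[K] K) := by
      intro c
      refine ⟨c • FreeLieAlgebra.of K 0, ?_⟩
      rw [map_smul]
      show c • (h18 K (FreeLieAlgebra.of K 0)) = c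
      rw [show h18 K (FreeLieAlgebra.of K 0) = 1 from h18_of_zero K, smul_eq_mul, mul_one]
    have hr : LinearMap.range (h18 K : FreeLieAlgebra K (Fin 2) →ₗ[K] K) = ⊤ :=
      LinearMap.range_eq_top.mpr hsurj
    rw [hker, (LinearMap.quotKerEquivRange
      (h18 K : FreeLieAlgebra K (Fin 2) →ₗ[K] K)).finrank_eq, hr, finrank_top,
      Module.finrank_self]
  · -- not finitely generated
    rintro ⟨s, hsub, hspan⟩
    set f : FreeLieAlgebra K (Fin 2) → Polynomial K :=
      fun z => ((φ K z) ((0 : Polynomial K), (1 : K))).1 with hf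
    set W : Submodule K (Polynomial K) := Submodule.span K (f '' s) with hW
    have key : ∀ z ∈ LieSubalgebra.lieSpan K (FreeLieAlgebra K (Fin 2))
        (s : Set (FreeLieAlgebra K (Fin 2))), z ∈ B18 K ∧ f z ∈ W := by
      intro z hz
      refine LieSubalgebra.lieSpan_induction K
        (p := fun w _ => w ∈ B18 K ∧ f w ∈ W) (fun x hx => ?_) ⟨?_, ?_⟩
        (fun x y _ _ hx hy => ⟨?_, ?_⟩) (fun t x _ hx => ⟨?_, ?_⟩) (fun x y _ _ hx hy => ⟨?_, ?_⟩) hz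
      · exact ⟨hsub hx, Submodule.subset_span (Set.mem_image_of_mem f hx)⟩
      · exact (B18 K).zero_mem
      · simp only [hf, map_zero, LinearMap.zero_apply, Prod.fst_zero]
        exact W.zero_mem
      · exact Submodule.add_mem _ hx.1 hy.1
      · have : f (x + y) = f x + f y := by
          simp only [hf, map_add, LinearMap.add_apply, Prod.fst_add]
        rw [this]; exact Submodule.add_mem _ hx.2 hy.2
      · exact Submodule.smul_mem _ t hx.1
      · have : f (t • x) = t • f x := by
          simp only [hf, map_smul, LinearMap.smul_apply, Prod.smul_fst]
        rw [this]; exact Submodule.smul_mem _ t hx.2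
      · exact (B18 K).lie_mem hy.1
      · -- the bracket of two elements of B maps to 0
        have hx0 : h18 K x = 0 := LieHom.mem_ker.mp hx.1
        have hy0 : h18 K y = 0 := LieHom.mem_ker.mp hy.1
        have hx0' : FreeLieAlgebra.lift K (![1, 0] : Fin 2 → K) x = 0 := hx0
        have hy0' : FreeLieAlgebra.lift K (![1, 0] : Fin 2 → K) y = 0 := hy0
        have e1 : (φ K y) ((0 : Polynomial K), (1 : K)) =
            (((φ K y) ((0 : Polynomial K), (1 : K))).1, 0) := by
          exact Prod.ext rfl (φ_snd K y _)
        have e2 : (φ K x) ((0 : Polynomial K), (1 : K)) =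
            (((φ K x) ((0 : Polynomial K), (1 : K))).1, 0) := by
          exact Prod.ext rfl (φ_snd K x _)
        have c1 : (φ K x) ((((φ K y) ((0 : Polynomial K), (1 : K))).1 :
            Polynomial K), 0) = 0 := by
          rw [φ_fst, hx0', zero_smul]; rfl
        have c2 : (φ K y) ((((φ K x) ((0 : Polynomial K), (1 : K))).1 :
            Polynomial K), 0) = 0 := by
          rw [φ_fst, hy0', zero_smul]; rfl
        have : f ⁅x, y⁆ = 0 := by
          rw [hf]
          simp only
          rw [LieHom.map_lie, Ring.lie_def, LinearMap.sub_apply, Module.End.mul_apply,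
            Module.End.mul_apply, e1, e2, c1, c2, sub_zero]
          rfl
        rw [this]; exact W.zero_mem
    have hXn : ∀ n : ℕ, (X : Polynomial K) ^ n ∈ W := by
      intro n
      have hmem : yn K n ∈ B18 K := LieHom.mem_ker.mpr (h18_yn K n)
      have hmem' : yn K n ∈ LieSubalgebra.lieSpan K (FreeLieAlgebra K (Fin 2))
          (s : Set (FreeLieAlgebra K (Fin 2))) := by
        have : yn K n ∈ (LieSubalgebra.lieSpan K (FreeLieAlgebra K (Fin 2))
            (s : Set (FreeLieAlgebra K (Fin 2))) :
            Set (FreeLieAlgebra K (Fin 2))) := by rw [hspan]; exact hmem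
        exact this
      have h2 : (((φ K) (yn K n)) ((0 : Polynomial K), (1 : K))).1 ∈ W :=
        (key _ hmem').2
      rw [φ_yn K n] at h2
      exact h2
    have hWtop : W = ⊤ := by
      refine top_unique ?_
      rw [← span_X_pow K]
      refine Submodule.span_le.mpr ?_
      rintro _ ⟨n, rfl⟩
      exact hXn n
    have hfin : Module.Finite K (Polynomial K) := by
      classical
      rw [Module.finite_def]
      exact ⟨s.image f, by rw [Finset.coe_image, ← hW, hWtop]⟩
    exact Polynomial.not_finite hfin
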